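/- Let T be a finite tree whose maximum degree satisfies Δ(T) ≥ 4, and let s be a nonzero real number. Then λ_max(M_T(s)) > 1 + 2|s| + s^2. -/

import Mathlib

open scoped Classical
open Matrix Polynomial

lemma acyclic_no_triangle {V : Type*} {G : SimpleGraph V} (hG : G.IsAcyclic) {a b c : V}
    (hab : G.Adj a b) (hbc : G.Adj b c) (hac : G.Adj a c) : False := by
  have hcycle := hG (SimpleGraph.Walk.cons hab (SimpleGraph.Walk.cons hbc
    (SimpleGraph.Walk.cons hac.symm SimpleGraph.Walk.nil)))
  apply hcycle
  have h1 : a ≠ b := hab.ne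
  have h2 : b ≠ c := hbc.ne
  have h3 : a ≠ c := hac.ne
  simp [SimpleGraph.Walk.isCycle_def, SimpleGraph.Walk.isTrail_def, List.Nodup,
    Sym2.eq_iff, h1, h2, h3, h1.symm, h2.symm, h3.symm]

lemma lt_sSup_spectrum' {V : Type*} [Fintype V] [DecidableEq V] {M : Matrix V V ℝ}
    (hM : M.IsHermitian) {x : V → ℝ} (hx : x ≠ 0) {c : ℝ}
    (h : c * (x ⬝ᵥ x) < (M *ᵥ x) ⬝ᵥ x) : c < sSup (spectrum ℝ M) := by
  haveI : Nonempty V := by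
    by_contra hV
    rw [not_nonempty_iff] at hV
    exact hx (funext fun i => (hV.false i).elim)
  have hSym := Matrix.isHermitian_iff_isSymmetric.mp hM
  set T := Matrix.toEuclideanLin M with hT
  set y : EuclideanSpace ℝ V := (WithLp.equiv 2 (V → ℝ)).symm x with hy
  have hy0 : y ≠ 0 := by
    simpa [hy] using hx
  haveI : Nontrivial (EuclideanSpace ℝ V) := nontrivial_of_ne y 0 hy0
  have hTy : T y = (WithLp.equiv 2 (V → ℝ)).symm (M *ᵥ x) := by
    rw [hy]; rfl
  have hinner : (inner ℝ (T y) y : ℝ) = (M *ᵥ x) ⬝ᵥ x := by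
    rw [hTy, hy, WithLp.equiv_symm_apply, EuclideanSpace.inner_toLp_toLp]
    simp [dotProduct_comm]
  have hnorm : ‖y‖ ^ 2 = x ⬝ᵥ x := by
    rw [← real_inner_self_eq_norm_sq, hy, WithLp.equiv_symm_apply, EuclideanSpace.inner_toLp_toLp]
    simp [dotProduct]
  have hxx : 0 < x ⬝ᵥ x :=
    lt_of_le_of_ne (Finset.sum_nonneg fun i _ => mul_self_nonneg _)
      (Ne.symm ((dotProduct_self_eq_zero (v := x)).not.mpr hx))
  set f : {z : EuclideanSpace ℝ V // z ≠ 0} → ℝ :=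
    fun z => RCLike.re (inner ℝ (T z) (z : EuclideanSpace ℝ V) : ℝ) / ‖(z : EuclideanSpace ℝ V)‖ ^ 2
    with hf
  have hbdd : BddAbove (Set.range f) := by
    refine ⟨‖LinearMap.toContinuousLinearMap T‖, ?_⟩
    rintro r ⟨z, rfl⟩
    have hz : 0 < ‖(z : EuclideanSpace ℝ V)‖ := norm_pos_iff.mpr z.2
    rw [hf]
    rw [div_le_iff₀ (by positivity)]
    calc RCLike.re (inner ℝ (T z) (z : EuclideanSpace ℝ V) : ℝ)
        ≤ ‖T z‖ * ‖(z : EuclideanSpace ℝ V)‖ := by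
          simpa using real_inner_le_norm (T (z : EuclideanSpace ℝ V)) z
      _ ≤ (‖LinearMap.toContinuousLinearMap T‖ * ‖(z : EuclideanSpace ℝ V)‖) *
          ‖(z : EuclideanSpace ℝ V)‖ := by
          have := (LinearMap.toContinuousLinearMap T).le_opNorm (z : EuclideanSpace ℝ V)
          have h2 : ‖T (z : EuclideanSpace ℝ V)‖
              = ‖LinearMap.toContinuousLinearMap T (z : EuclideanSpace ℝ V)‖ := rfl
          nlinarith [norm_nonneg (z : EuclideanSpace ℝ V)]
      _ = ‖LinearMap.toContinuousLinearMap T‖ * ‖(z : EuclideanSpace ℝ V)‖ ^ 2 := by ring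
  have hEig := hSym.hasEigenvalue_iSup_of_finiteDimensional
  have hmem : (⨆ z : {z : EuclideanSpace ℝ V // z ≠ 0}, f z) ∈ spectrum ℝ M := by
    rw [← Matrix.spectrum_toEuclideanLin (A := M)]
    exact Module.End.HasEigenvalue.mem_spectrum (by simpa [hf] using hEig)
  have hle : (⨆ z, f z) ≤ sSup (spectrum ℝ M) :=
    le_csSup (Matrix.finite_real_spectrum).bddAbove hmem
  have hcf : c < f ⟨y, hy0⟩ := by
    rw [hf]
    simp only [RCLike.re_to_real]
    rw [lt_div_iff₀ (by rw [hnorm]; exact hxx), hnorm]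
    simpa [hinner] using h
  exact lt_of_lt_of_le (lt_of_lt_of_le hcf (le_ciSup hbdd ⟨y, hy0⟩)) hle

/-- The deformed Laplacian matrix `M_G(s) = I - s·A(G) + s²·(D(G) - I)` of a finite
simple graph `G`. -/
noncomputable def deformedLap {V : Type*} [Fintype V] (G : SimpleGraph V) (s : ℝ) :
    Matrix V V ℝ :=
  1 - s • G.adjMatrix ℝ + s ^ 2 • (Matrix.diagonal (fun v => (G.degree v : ℝ)) - 1)

/-- The largest (real) eigenvalue of a matrix: the supremum of its real spectrum.
For a real symmetric matrix this is the maximal eigenvalue (the paper's `ρ`). -/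
noncomputable def lamMax {n : Type*} [Fintype n] (M : Matrix n n ℝ) : ℝ :=
  sSup (spectrum ℝ M)

/-- If a tree `T` has maximum degree at least `4` and `s ≠ 0`, then
`λ_max(M_T(s)) > 1 + 2|s| + s²`. -/
theorem stmt_11 {V : Type*} [Fintype V] (T : SimpleGraph V) (hT : T.IsTree)
    (hΔ : 4 ≤ T.maxDegree) (s : ℝ) (hs : s ≠ 0) :
    1 + 2 * |s| + s ^ 2 < lamMax (deformedLap T s) := by
  classical
  haveI : Nonempty V := hT.isConnected.nonempty
  obtain ⟨v, hv⟩ := T.exists_maximal_degree_vertex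
  have hd4 : 4 ≤ T.degree v := hv ▸ hΔ
  set ε : ℝ := if 0 ≤ s then -(1/2) else 1/2 with hεdef
  have hε2 : ε ^ 2 = 1/4 := by
    rcases le_or_gt 0 s with h | h <;> simp [hεdef, h, not_le.mpr] <;> norm_num
  have hsε : s * ε = -|s| / 2 := by
    rcases le_or_gt 0 s with h | h
    · rw [abs_of_nonneg h]; simp [hεdef, h]; ring
    · rw [abs_of_neg h]; simp [hεdef, not_le.mpr h]; ring
  set x : V → ℝ := fun w => if w = v then 1 else if T.Adj v w then ε else 0 with hxdef
  have hxv : x v = 1 := by simp [hxdef]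
  have hx0 : x ≠ 0 := by
    intro h
    have := congrFun h v
    rw [hxv] at this
    exact one_ne_zero this
  set N := T.neighborFinset v with hN
  have hvN : v ∉ N := T.notMem_neighborFinset_self v
  have hcard : N.card = T.degree v := T.card_neighborFinset_eq_degree v
  have hxN : ∀ w ∈ N, x w = ε := by
    intro w hw
    rw [hN, SimpleGraph.mem_neighborFinset] at hw
    have : w ≠ v := fun h => T.loopless.irrefl v (h ▸ hw)
    simp [hxdef, this, hw]
  have hxout : ∀ w, w ∉ insert v N → x w = 0 := by
    intro w hw
    simp only [Finset.mem_insert, hN, SimpleGraph.mem_neighborFinset] at hw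
    push_neg at hw
    simp [hxdef, hw.1, hw.2]
  have hS0 : x ⬝ᵥ x = 1 + (T.degree v : ℝ) * ε ^ 2 := by
    rw [dotProduct,
      ← Finset.sum_subset (Finset.subset_univ (insert v N))
        (fun w _ hw => by rw [hxout w hw]; ring),
      Finset.sum_insert hvN, hxv,
      Finset.sum_congr rfl (fun w hw => by rw [hxN w hw, ← sq])]
    rw [Finset.sum_const, hcard, nsmul_eq_mul]
    ring
  have hS1 : (T.adjMatrix ℝ *ᵥ x) ⬝ᵥ x = 2 * (T.degree v : ℝ) * ε := by
    rw [dotProduct,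
      ← Finset.sum_subset (Finset.subset_univ (insert v N))
        (fun w _ hw => by rw [hxout w hw]; ring),
      Finset.sum_insert hvN]
    have hv_term : (T.adjMatrix ℝ *ᵥ x) v * x v = (T.degree v : ℝ) * ε := by
      rw [hxv, SimpleGraph.adjMatrix_mulVec_apply, mul_one,
        Finset.sum_congr rfl (fun u hu => hxN u (hN ▸ hu)),
        Finset.sum_const]
      rw [show T.neighborFinset v = N from hN.symm, hcard, nsmul_eq_mul]
    have hw_term : ∀ w ∈ N, (T.adjMatrix ℝ *ᵥ x) w * x w = ε := by
      intro w hw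
      have hadj : T.Adj v w := by rwa [hN, SimpleGraph.mem_neighborFinset] at hw
      rw [hxN w hw, SimpleGraph.adjMatrix_mulVec_apply]
      have hsum : ∑ u ∈ T.neighborFinset w, x u = 1 := by
        rw [Finset.sum_eq_single v]
        · exact hxv
        · intro u hu huv
          rw [SimpleGraph.mem_neighborFinset] at hu
          have hnadj : ¬ T.Adj v u := fun hvu =>
            acyclic_no_triangle hT.IsAcyclic hadj hu hvu
          simp [hxdef, huv, hnadj]
        · intro hnv
          exact absurd (by rw [SimpleGraph.mem_neighborFinset]; exact hadj.symm) hnv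
      rw [hsum, one_mul]
    rw [Finset.sum_congr rfl hw_term, Finset.sum_const, hcard, nsmul_eq_mul, hv_term]
    ring
  have hS2 : (T.degree v : ℝ) + (T.degree v : ℝ) * ε ^ 2 ≤
      (Matrix.diagonal (fun w => (T.degree w : ℝ)) *ᵥ x) ⬝ᵥ x := by
    have hterm : ∀ w, (Matrix.diagonal (fun u => (T.degree u : ℝ)) *ᵥ x) w * x w
        = (T.degree w : ℝ) * x w ^ 2 := by
      intro w; rw [Matrix.mulVec_diagonal]; ring
    rw [dotProduct]
    calc (T.degree v : ℝ) + (T.degree v : ℝ) * ε ^ 2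
        ≤ ∑ w ∈ insert v N, (T.degree w : ℝ) * x w ^ 2 := by
          rw [Finset.sum_insert hvN, hxv, one_pow, mul_one]
          have : (T.degree v : ℝ) * ε ^ 2 = ∑ w ∈ N, (1 : ℝ) * ε ^ 2 := by
            rw [Finset.sum_const, hcard, nsmul_eq_mul]; ring
          rw [this]
          refine add_le_add le_rfl (Finset.sum_le_sum ?_)
          intro w hw
          have hadj : T.Adj v w := by rwa [hN, SimpleGraph.mem_neighborFinset] at hw
          have hdeg : (1:ℝ) ≤ (T.degree w : ℝ) := by
            exact_mod_cast (SimpleGraph.degree_pos_iff_exists_adj T w).mpr ⟨v, hadj.symm⟩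
          rw [hxN w hw]
          nlinarith [sq_nonneg ε]
      _ ≤ ∑ w, (T.degree w : ℝ) * x w ^ 2 := by
          apply Finset.sum_le_sum_of_subset_of_nonneg (Finset.subset_univ _)
          intro w _ _
          positivity
      _ = ∑ w, (Matrix.diagonal (fun u => (T.degree u : ℝ)) *ᵥ x) w * x w := by
          exact Finset.sum_congr rfl fun w _ => (hterm w).symm
  have hM : (deformedLap T s).IsHermitian := by
    apply Matrix.IsHermitian.ext
    intro i j
    rcases eq_or_ne i j with rfl | hij
    · simp
    · simp [deformedLap, Matrix.one_apply, Matrix.diagonal_apply, hij, hij.symm,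
        T.adj_comm j i]
  apply lt_sSup_spectrum' hM hx0
  have hQ : (deformedLap T s *ᵥ x) ⬝ᵥ x
      = x ⬝ᵥ x - s * ((T.adjMatrix ℝ *ᵥ x) ⬝ᵥ x)
        + s ^ 2 * ((Matrix.diagonal (fun w => (T.degree w : ℝ)) *ᵥ x) ⬝ᵥ x - x ⬝ᵥ x) := by
    simp [deformedLap, Matrix.sub_mulVec, Matrix.add_mulVec, Matrix.smul_mulVec,
      Matrix.one_mulVec, sub_dotProduct, add_dotProduct, smul_dotProduct,
      smul_eq_mul]
  rw [hQ, hS0, hS1]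
  have hd4' : (4:ℝ) ≤ (T.degree v : ℝ) := by exact_mod_cast hd4
  have habs : 0 < |s| := abs_pos.mpr hs
  have hsq : s ^ 2 = |s| ^ 2 := (sq_abs s).symm
  have h2 : s * (2 * (T.degree v : ℝ) * ε) = -((T.degree v : ℝ) * |s|) := by
    have h3 : s * (2 * (T.degree v : ℝ) * ε) = 2 * (T.degree v : ℝ) * (s * ε) := by ring
    rw [h3, hsε]; ring
  have hkey := mul_le_mul_of_nonneg_left hS2 (sq_nonneg s)
  rw [hε2] at hkey ⊢
  rw [h2, hsq] at *
  have hint1 : 0 ≤ |s| * ((T.degree v : ℝ)/2 - 2) :=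
    mul_nonneg habs.le (by linarith)
  have hint2 : 0 < |s| * |s| * (3 * (T.degree v : ℝ)/4 - 2) :=
    mul_pos (mul_pos habs habs) (by linarith)
  nlinarith [hkey, hint1, hint2]
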